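/- arXiv:2406.16270 — 2 statements merged into one kernel-verified Lean document; each statement's English description precedes it below -/
import Mathlib

section
/- If the Space Saving algorithm with k counters has processed N insertions, then the minimum counter value among all monitored items is at most N/k. -/
/-- State of the Space Saving algorithm: a set `T` of monitored items and a
counter function `c` (counters of unmonitored items are 0). -/
structure SSState (α : Type) where
  T : Finset α
  c : α → ℕ

/-- One step of Space Saving with `k` counters on arrival of item `i`. -/
def ssStep {α : Type} [DecidableEq α] (k : ℕ) (i : α) (s s' : SSState α) : Prop :=
  (i ∈ s.T ∧ s'.T = s.T ∧ s'.c = Function.update s.c i (s.c i + 1)) ∨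
  (i ∉ s.T ∧ s.T.card < k ∧ s'.T = insert i s.T ∧ s'.c = Function.update s.c i 1) ∨
  (i ∉ s.T ∧ s.T.card = k ∧ ∃ j ∈ s.T, (∀ j' ∈ s.T, s.c j ≤ s.c j') ∧
      s'.T = insert i (s.T.erase j) ∧
      s'.c = Function.update (Function.update s.c j 0) i (s.c j + 1))

/-- `ssRun k l s` : processing the stream `l` from the empty initial state can
lead Space Saving with `k` counters to state `s`. -/
inductive ssRun {α : Type} [DecidableEq α] (k : ℕ) : List α → SSState α → Prop
  | nil : ssRun k [] ⟨∅, fun _ => 0⟩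
  | snoc {l : List α} {s s' : SSState α} {i : α} :
      ssRun k l s → ssStep k i s s' → ssRun k (l ++ [i]) s'

/-- The reported frequency estimate: the counter of `i` if monitored,
otherwise the minimum counter. -/
def ssEst {α : Type} [DecidableEq α] (s : SSState α) (h : s.T.Nonempty) (i : α) : ℕ :=
  if i ∈ s.T then s.c i else s.T.inf' h s.c


lemma ssRun_sum {α : Type} [DecidableEq α] {k : ℕ} {l : List α} {s : SSState α}
    (hrun : ssRun k l s) : ∑ x ∈ s.T, s.c x = l.length := by
  induction hrun with
  | nil => simp
  | @snoc l s s' i hr hstep ih =>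
    simp only [List.length_append, List.length_singleton]
    rcases hstep with ⟨hi, hT, hc⟩ | ⟨hi, _, hT, hc⟩ | ⟨hi, _, j, hj, hmin, hT, hc⟩
    · rw [hT, hc, Finset.sum_update_of_mem hi,
        Finset.sum_eq_sum_sdiff_singleton_add hi s.c] at *
      omega
    · rw [hT, hc, Finset.sum_insert hi]
      rw [Function.update_self]
      have : ∑ x ∈ s.T, Function.update s.c i 1 x = ∑ x ∈ s.T, s.c x :=
        Finset.sum_congr rfl fun x hx =>
          Function.update_of_ne (by rintro rfl; exact hi hx) _ _
      omega
    · have hinotin : i ∉ s.T.erase j := fun h => hi (Finset.mem_of_mem_erase h)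
      rw [hT, hc, Finset.sum_insert hinotin, Function.update_self]
      have : ∑ x ∈ s.T.erase j,
          Function.update (Function.update s.c j 0) i (s.c j + 1) x
          = ∑ x ∈ s.T.erase j, s.c x := by
        refine Finset.sum_congr rfl fun x hx => ?_
        rw [Function.update_of_ne (by rintro rfl; exact hinotin hx),
          Function.update_of_ne (Finset.ne_of_mem_erase hx)]
      rw [this]
      have h2 : ∑ x ∈ s.T.erase j, s.c x + s.c j = ∑ x ∈ s.T, s.c x :=
        Finset.sum_erase_add _ _ hj
      omega

/-- After processing `N` insertions with a full table, the minimum counter of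
Space Saving with `k` counters is at most `N / k`. -/
theorem spaceSaving_minCount_le {α : Type} [DecidableEq α] (k N : ℕ) (hk : 0 < k)
    (l : List α) (s : SSState α) (hrun : ssRun k l s) (hN : l.length = N)
    (hfull : s.T.card = k) (hne : s.T.Nonempty) :
    ((s.T.inf' hne s.c : ℕ) : ℝ) ≤ (N : ℝ) / (k : ℝ) := by
  have hsum : ∑ x ∈ s.T, s.c x = N := hN ▸ ssRun_sum hrun
  have hmin : s.T.card • (s.T.inf' hne s.c) ≤ ∑ x ∈ s.T, s.c x :=
    Finset.card_nsmul_le_sum _ _ _ fun x hx => Finset.inf'_le _ hx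
  rw [hfull, smul_eq_mul, hsum] at hmin
  rw [le_div_iff₀ (by positivity)]
  calc ((s.T.inf' hne s.c : ℕ) : ℝ) * k = ((k * s.T.inf' hne s.c : ℕ) : ℝ) := by
        push_cast; ring
    _ ≤ (N : ℝ) := by exact_mod_cast hmin
end

section
/- For every item i, the Space Saving estimate satisfies f_i ≤ f̂_i ≤ f_i + minCount, where f_i is the true frequency of i, f̂_i is the reported estimate (the counter of i if monitored, else the minimum counter), and minCount is the minimum counter value. -/
lemma count_snoc {α : Type} [DecidableEq α] (l : List α) (i x : α) :
    (l ++ [i]).count x = l.count x + if x = i then 1 else 0 := by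
  simp [List.count_append, List.count_singleton']
  split <;> simp_all [eq_comm]

def ssInv {α : Type} [DecidableEq α] (k : ℕ) (l : List α) (s : SSState α) : Prop :=
  (∀ x ∉ s.T, ∀ j ∈ s.T, l.count x ≤ s.c j) ∧
  (s.T.card < k → ∀ x ∉ s.T, l.count x = 0) ∧
  (∀ i ∈ s.T, l.count i ≤ s.c i) ∧
  (∀ i ∈ s.T, ∀ j ∈ s.T, s.c i ≤ l.count i + s.c j) ∧
  (s.T.card < k → ∀ i ∈ s.T, s.c i = l.count i)

lemma ssRun_inv {α : Type} [DecidableEq α] {k : ℕ} {l : List α} {s : SSState α}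
    (h : ssRun k l s) : ssInv k l s := by
  induction h with
  | nil => refine ⟨?_, ?_, ?_, ?_, ?_⟩ <;> simp [ssInv]
  | @snoc l s s' i hrun hstep ih =>
    obtain ⟨B, C, D, E, F⟩ := ih
    rcases hstep with ⟨hi, hT, hc⟩ | ⟨hi, hcard, hT, hc⟩ | ⟨hi, hcard, j, hj, hmin, hT, hc⟩
    · -- increment case
      refine ⟨?_, ?_, ?_, ?_, ?_⟩
      · intro x hx j' hj'
        rw [hT] at hx hj'
        rw [count_snoc, hc, Function.update_apply]
        have hxi : x ≠ i := fun h => hx (h ▸ hi)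
        simp only [hxi, if_false, add_zero]
        have h1 := B x hx i hi
        have h2 := B x hx j' hj'
        split <;> omega
      · intro hcard x hx
        rw [hT] at hcard hx
        rw [count_snoc]
        have hxi : x ≠ i := fun h => hx (h ▸ hi)
        simp only [hxi, if_false, add_zero]
        exact C hcard x hx
      · intro y hy
        rw [hT] at hy
        rw [count_snoc, hc, Function.update_apply]
        have := D y hy
        split_ifs with h
        · subst h; omega
        · omega
      · intro x hx y hy
        rw [hT] at hx hy
        rw [count_snoc, hc, Function.update_apply, Function.update_apply]
        have h1 := E x hx y hy
        have h2 := E x hx i hi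
        have h3 := E i hi y hy
        split_ifs <;> subst_vars <;> omega
      · intro hcard y hy
        rw [hT] at hcard hy
        rw [count_snoc, hc, Function.update_apply]
        have := F hcard y hy
        split_ifs with h
        · subst h; omega
        · omega
    · -- insert case (card < k): everything was exact
      have exact' : ∀ y ∈ s'.T, s'.c y = (l ++ [i]).count y := by
        intro y hy
        rw [hT] at hy
        rcases Finset.mem_insert.mp hy with hyi | hyT
        · subst hyi
          rw [count_snoc, hc]
          simp [Function.update_apply, C hcard y hi]
        · have hyi : y ≠ i := fun h => hi (h ▸ hyT)
          rw [count_snoc, hc]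
          simp [Function.update_apply, hyi, F hcard y hyT]
      refine ⟨?_, ?_, ?_, ?_, ?_⟩
      · intro x hx j hj
        rw [hT] at hx
        have hxi : x ≠ i := fun h => hx (h ▸ Finset.mem_insert_self i s.T)
        have hxT : x ∉ s.T := fun h => hx (Finset.mem_insert_of_mem h)
        rw [count_snoc]
        simp only [hxi, if_false, add_zero, C hcard x hxT]
        exact Nat.zero_le _
      · intro hcard' x hx
        rw [hT] at hx
        have hxi : x ≠ i := fun h => hx (h ▸ Finset.mem_insert_self i s.T)
        have hxT : x ∉ s.T := fun h => hx (Finset.mem_insert_of_mem h)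
        rw [count_snoc]
        simp [hxi, C hcard x hxT]
      · intro y hy; exact le_of_eq (exact' y hy).symm
      · intro y hy j hj; rw [exact' y hy]; exact Nat.le_add_right _ _
      · intro _ y hy; exact exact' y hy
    · -- eviction case
      have hji : j ≠ i := fun h => hi (h ▸ hj)
      have hci : s'.c i = s.c j + 1 := by rw [hc]; simp
      have hcy : ∀ y, y ≠ i → y ≠ j → s'.c y = s.c y := by
        intro y h1 h2
        rw [hc, Function.update_apply, Function.update_apply]
        simp [h1, h2]
      have hcnew_ge : ∀ y ∈ s'.T, s.c j ≤ s'.c y := by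
        intro y hy
        rw [hT] at hy
        rcases Finset.mem_insert.mp hy with hyi | hyT
        · rw [hyi, hci]; omega
        · have h1 : y ≠ i := fun h => hi (h ▸ Finset.mem_of_mem_erase hyT)
          have h2 : y ≠ j := Finset.ne_of_mem_erase hyT
          rw [hcy y h1 h2]
          exact hmin y (Finset.mem_of_mem_erase hyT)
      have hcardT : s'.T.card = k := by
        rw [hT, Finset.card_insert_of_notMem (by simp [Finset.mem_erase, hi]),
          Finset.card_erase_of_mem hj, hcard]
        have hk0 : 0 < k := hcard ▸ Finset.card_pos.mpr ⟨j, hj⟩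
        omega
      refine ⟨?_, ?_, ?_, ?_, ?_⟩
      · intro x hx j' hj'
        rw [hT] at hx
        have hxi : x ≠ i := fun h => hx (h ▸ Finset.mem_insert_self _ _)
        rw [count_snoc]
        simp only [hxi, if_false, add_zero]
        refine le_trans ?_ (hcnew_ge j' hj')
        by_cases hxT : x ∈ s.T
        · have hxj : x = j := by
            by_contra hne
            exact hx (Finset.mem_insert_of_mem (Finset.mem_erase.mpr ⟨hne, hxT⟩))
          rw [hxj]; exact D j hj
        · exact B x hxT j hj
      · intro h; rw [hcardT] at h; exact absurd h (lt_irrefl k)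
      · intro y hy
        rw [hT] at hy
        rw [count_snoc]
        rcases Finset.mem_insert.mp hy with hyi | hyT
        · rw [hyi, hci]
          have := B i hi j hj
          simp only [if_pos rfl, if_true]
          omega
        · have h1 : y ≠ i := fun h => hi (h ▸ Finset.mem_of_mem_erase hyT)
          have h2 : y ≠ j := Finset.ne_of_mem_erase hyT
          rw [hcy y h1 h2]
          simp only [h1, if_false, add_zero]
          exact D y (Finset.mem_of_mem_erase hyT)
      · intro y hy j' hj'
        have h2 := hcnew_ge j' hj'
        rw [hT] at hy
        rw [count_snoc]
        rcases Finset.mem_insert.mp hy with hyi | hyT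
        · rw [hyi, hci]
          simp only [if_pos rfl, if_true]
          omega
        · have h1 : y ≠ i := fun h => hi (h ▸ Finset.mem_of_mem_erase hyT)
          have hyj : y ≠ j := Finset.ne_of_mem_erase hyT
          rw [hcy y h1 hyj]
          simp only [h1, if_false, add_zero]
          have := E y (Finset.mem_of_mem_erase hyT) j hj
          omega
      · intro h y hy; rw [hcardT] at h; exact absurd h (lt_irrefl k)

/-- For every item `i`, the Space Saving estimate satisfies
`f_i ≤ est_i ≤ f_i + minCount`. -/
theorem spaceSaving_estimate_bounds {α : Type} [DecidableEq α] (k : ℕ) (hk : 0 < k)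
    (l : List α) (s : SSState α) (hrun : ssRun k l s) (hne : s.T.Nonempty) (i : α) :
    l.count i ≤ ssEst s hne i ∧ ssEst s hne i ≤ l.count i + s.T.inf' hne s.c := by
  obtain ⟨B, C, D, E, F⟩ := ssRun_inv hrun
  by_cases hiT : i ∈ s.T
  · refine ⟨?_, ?_⟩
    · rw [ssEst, if_pos hiT]; exact D i hiT
    · rw [ssEst, if_pos hiT]
      obtain ⟨j, hj, hje⟩ := Finset.exists_mem_eq_inf' hne s.c
      rw [hje]
      exact E i hiT j hj
  · refine ⟨?_, ?_⟩
    · rw [ssEst, if_neg hiT]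
      exact Finset.le_inf' hne _ (fun j hj => B i hiT j hj)
    · rw [ssEst, if_neg hiT]
      exact Nat.le_add_left _ _
end
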